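/- arXiv:2410.15085 — 3 statements merged into one kernel-verified Lean document; each statement's English description precedes it below -/
import Mathlib

section
/- Let G be a finite elementary abelian p-group and V a locally finite representation of G over F_p. If V is infinite-dimensional, then V^G is infinite-dimensional. -/
open Module LinearMap

section aux
variable {k V : Type*} [Field k] [AddCommGroup V] [Module k V]

lemma aux_ker_pow [FiniteDimensional k V] (f : V →ₗ[k] V) (n : ℕ) :
    finrank k (LinearMap.ker (f ^ n)) ≤ n * finrank k (LinearMap.ker f) := by
  induction n with
  | zero => simp [Module.End.one_eq_id]
  | succ n ih =>
    have hmem : ∀ x ∈ LinearMap.ker (f ^ (n+1)), f x ∈ LinearMap.ker (f ^ n) := by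
      intro x hx
      rw [LinearMap.mem_ker] at hx ⊢
      rw [← Module.End.mul_apply, ← pow_succ]
      exact hx
    set g := f.restrict hmem with hg
    have h1 : finrank k (LinearMap.range g) + finrank k (LinearMap.ker g)
        = finrank k (LinearMap.ker (f ^ (n+1))) := LinearMap.finrank_range_add_finrank_ker g
    have h2 : finrank k (LinearMap.range g) ≤ finrank k (LinearMap.ker (f ^ n)) :=
      (LinearMap.range g).finrank_le
    have h3 : finrank k (LinearMap.ker g) ≤ finrank k (LinearMap.ker f) := by
      let ι : LinearMap.ker g →ₗ[k] V :=
        (LinearMap.ker (f ^ (n+1))).subtype.comp (LinearMap.ker g).subtype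
      have hι : ∀ x : LinearMap.ker g, ι x ∈ LinearMap.ker f := by
        rintro ⟨x, hx⟩
        have : (g x : V) = 0 := by rw [hx]; rfl
        rw [LinearMap.restrict_coe_apply] at this
        simpa [ι, LinearMap.mem_ker] using this
      have hinj : Function.Injective (LinearMap.codRestrict (LinearMap.ker f) ι hι) := by
        intro a b hab
        have h2 : ι a = ι b := by
          have := congrArg Subtype.val hab
          simpa using this
        exact Subtype.ext (Subtype.ext h2)
      exact LinearMap.finrank_le_finrank_of_injective hinj
    calc finrank k (LinearMap.ker (f ^ (n+1)))
        = finrank k (LinearMap.range g) + finrank k (LinearMap.ker g) := h1.symm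
      _ ≤ finrank k (LinearMap.ker (f ^ n)) + finrank k (LinearMap.ker f) := Nat.add_le_add h2 h3
      _ ≤ n * finrank k (LinearMap.ker f) + finrank k (LinearMap.ker f) := Nat.add_le_add_right ih _
      _ = (n + 1) * finrank k (LinearMap.ker f) := by ring
end aux

/-- A representation is locally finite if every finite subset is contained in a
finite-dimensional subrepresentation (equivalently, finitely generated
subrepresentations are finite-dimensional). -/
def Representation.IsLocallyFinite {k G V : Type*} [Field k] [Monoid G]
    [AddCommGroup V] [Module k V] (ρ : Representation k G V) : Prop :=
  ∀ s : Finset V, ∃ W : Submodule k V,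
    (∀ g : G, ∀ v ∈ W, ρ g v ∈ W) ∧ (s : Set V) ⊆ (W : Set V) ∧ FiniteDimensional k W

theorem stmt_3 (p : ℕ) [Fact p.Prime] (G : Type*) [CommGroup G] [Finite G]
    (hG : ∀ g : G, g ^ p = 1)
    (V : Type*) [AddCommGroup V] [Module (ZMod p) V]
    (ρ : Representation (ZMod p) G V)
    (hlf : ρ.IsLocallyFinite)
    (hinf : ¬ FiniteDimensional (ZMod p) V) :
    ¬ FiniteDimensional (ZMod p) (Representation.invariants ρ) := by
  classical
  cases nonempty_fintype G
  intro hfin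
  have hpt : 0 < p := (Fact.out : p.Prime).pos
  -- V is nontrivial
  have hVnt : Nontrivial V := by
    by_contra h
    rw [not_nontrivial_iff_subsingleton] at h
    exact hinf (Module.Finite.of_basis (Basis.empty (ι := Fin 0) V))
  haveI : CharP (Module.End (ZMod p) V) p :=
    charP_of_injective_algebraMap
      (algebraMap (ZMod p) (Module.End (ZMod p) V)).injective p
  have hnil : ∀ g : G, ((ρ g) - 1 : Module.End (ZMod p) V) ^ p = 0 := by
    intro g
    rw [sub_pow_char_of_commute _ (Commute.one_right _), one_pow, ← map_pow, hG, map_one,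
      sub_self]
  -- dimension bound for invariant finite-dimensional submodules
  have key : ∀ U : Submodule (ZMod p) V, FiniteDimensional (ZMod p) U →
      (∀ g : G, ∀ v ∈ U, ρ g v ∈ U) → ∀ a : G,
      finrank (ZMod p) U ≤ p * finrank (ZMod p) ↥(U ⊓ LinearMap.ker ((ρ a) - 1)) := by
    intro U hU hUinv a
    have hres : ∀ x ∈ U, ((ρ a) - 1 : Module.End (ZMod p) V) x ∈ U := by
      intro x hx
      simpa using U.sub_mem (hUinv a x hx) hx
    have hpow : (((ρ a) - 1 : Module.End (ZMod p) V).restrict hres) ^ p = 0 := by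
      rw [Module.End.pow_restrict]
      ext x
      simp [LinearMap.restrict_apply, hnil a]
    have := aux_ker_pow (((ρ a) - 1 : Module.End (ZMod p) V).restrict hres) p
    rw [hpow, LinearMap.ker_zero, finrank_top] at this
    refine le_trans this (Nat.mul_le_mul_left p ?_)
    rw [LinearMap.ker_restrict]
    have heq : (LinearMap.ker ((ρ a) - 1 : Module.End (ZMod p) V)).comap U.subtype
        = (U ⊓ LinearMap.ker ((ρ a) - 1)).comap U.subtype := by
      rw [Submodule.comap_inf, Submodule.comap_subtype_self, top_inf_eq]
    rw [heq]
    exact le_of_eq ((Submodule.comapSubtypeEquivOfLe inf_le_left).finrank_eq)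
  -- invariance of intersections
  have inv_step : ∀ U : Submodule (ZMod p) V, (∀ g : G, ∀ v ∈ U, ρ g v ∈ U) → ∀ a : G,
      (∀ g : G, ∀ v ∈ U ⊓ LinearMap.ker ((ρ a) - 1), ρ g v ∈ U ⊓ LinearMap.ker ((ρ a) - 1)) := by
    intro U hUinv a g v hv
    rw [Submodule.mem_inf] at hv ⊢
    obtain ⟨hv1, hv2⟩ := hv
    rw [LinearMap.mem_ker] at hv2
    refine ⟨hUinv g v hv1, ?_⟩
    rw [LinearMap.mem_ker]
    have hfix : ρ a v = v := by
      simpa [LinearMap.sub_apply, Module.End.one_apply, sub_eq_zero] using hv2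
    have hcomm : ρ a (ρ g v) = ρ g v := by
      rw [← Module.End.mul_apply, ← map_mul, mul_comm a g, map_mul, Module.End.mul_apply, hfix]
    simp [LinearMap.sub_apply, Module.End.one_apply, sub_eq_zero, hcomm]
  -- main induction
  have bound : ∀ S : Finset G, ∀ U : Submodule (ZMod p) V, FiniteDimensional (ZMod p) U →
      (∀ g : G, ∀ v ∈ U, ρ g v ∈ U) →
      finrank (ZMod p) U ≤ p ^ S.card *
        finrank (ZMod p) ↥(U ⊓ ⨅ g ∈ S, LinearMap.ker ((ρ g) - 1)) := by
    intro S
    induction S using Finset.induction_on with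
    | empty =>
      intro U hU hUinv
      have he : (⨅ g ∈ (∅ : Finset G), LinearMap.ker ((ρ g) - 1 : Module.End (ZMod p) V)) = ⊤ := by
        simp
      rw [he, inf_top_eq]
      simp
    | @insert a S ha ih =>
      intro U hU hUinv
      set U' := U ⊓ LinearMap.ker ((ρ a) - 1) with hU'
      haveI : FiniteDimensional (ZMod p) U' := Submodule.finiteDimensional_of_le inf_le_left
      have h1 := key U hU hUinv a
      have h2 := ih U' this (inv_step U hUinv a)
      have heq : U' ⊓ ⨅ g ∈ S, LinearMap.ker ((ρ g) - 1)
          = U ⊓ ⨅ g ∈ insert a S, LinearMap.ker ((ρ g) - 1) := by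
        rw [Finset.iInf_insert, hU', inf_assoc]
      rw [heq] at h2
      calc finrank (ZMod p) U ≤ p * finrank (ZMod p) U' := h1
        _ ≤ p * (p ^ S.card * finrank (ZMod p)
              ↥(U ⊓ ⨅ g ∈ insert a S, LinearMap.ker ((ρ g) - 1))) := Nat.mul_le_mul_left p h2
        _ = p ^ (insert a S).card * finrank (ZMod p)
              ↥(U ⊓ ⨅ g ∈ insert a S, LinearMap.ker ((ρ g) - 1)) := by
            rw [Finset.card_insert_of_notMem ha, pow_succ]; ring
  -- the uniform bound
  set d := finrank (ZMod p) (Representation.invariants ρ) with hd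
  set C := p ^ (Finset.univ : Finset G).card * d with hC
  -- invariants as iInf of kernels
  have hinv_eq : (⨅ g ∈ (Finset.univ : Finset G), LinearMap.ker ((ρ g) - 1 : Module.End (ZMod p) V))
      = Representation.invariants ρ := by
    ext v
    simp [Representation.mem_invariants, LinearMap.mem_ker, sub_eq_zero]
  -- get C+1 independent vectors
  have hrank : (↑(C + 1) : Cardinal) ≤ Module.rank (ZMod p) V := by
    by_contra h
    push_neg at h
    have : Module.rank (ZMod p) V < Cardinal.aleph0 := lt_trans h (Cardinal.nat_lt_aleph0 _)
    exact hinf (IsNoetherian.iff_fg.mp (IsNoetherian.iff_rank_lt_aleph0.mpr this))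
  obtain ⟨s, hcard, hli⟩ := le_rank_iff_exists_linearIndependent_finset.mp hrank
  obtain ⟨W, hWinv, hsW, hWfd⟩ := hlf s
  have hb := bound Finset.univ W hWfd hWinv
  rw [hinv_eq] at hb
  have hle : finrank (ZMod p) ↥(W ⊓ Representation.invariants ρ) ≤ d :=
    Submodule.finrank_mono inf_le_right
  have hWle : finrank (ZMod p) W ≤ C :=
    le_trans hb (Nat.mul_le_mul_left _ hle)
  -- s gives C+1 independent vectors in W
  have hliW : LinearIndependent (ZMod p) (fun x : (s : Set V) => (⟨x.1, hsW x.2⟩ : W)) := by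
    apply LinearIndependent.of_comp W.subtype
    convert hli using 1 <;> rfl
  have hcardle : s.card ≤ finrank (ZMod p) W := by
    have := hliW.fintype_card_le_finrank
    simpa using this
  omega
end

section
/- Let G be an elementary abelian p-group and V a locally finite F_p-representation of G. If V is infinite-dimensional, then at least one of V^G and (V/V^G)^G is infinite-dimensional. -/
/-- The representation induced on the quotient of `V` by the subspace of invariants. -/
noncomputable def Representation.quotInvariants {k G V : Type*} [CommRing k] [Group G]
    [AddCommGroup V] [Module k V] (ρ : Representation k G V) :
    Representation k G (V ⧸ ρ.invariants) where
  toFun g := Submodule.mapQ ρ.invariants ρ.invariants (ρ g)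
    (fun v hv => by
      simp only [Submodule.mem_comap]
      rw [(Representation.mem_invariants ρ v).mp hv g]
      exact hv)
  map_one' := by
    refine LinearMap.ext fun x => ?_
    obtain ⟨v, rfl⟩ := Submodule.Quotient.mk_surjective _ x
    simp [Submodule.mapQ_apply]
  map_mul' g h := by
    refine LinearMap.ext fun x => ?_
    obtain ⟨v, rfl⟩ := Submodule.Quotient.mk_surjective _ x
    simp [Submodule.mapQ_apply]


open Module Submodule

namespace Stmt5Aux

universe u

variable {p : ℕ} [Fact p.Prime] {G : Type*} [Group G]
variable {V : Type u} [AddCommGroup V] [Module (ZMod p) V]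

/-- The span of the operators `σ g - 1`. -/
noncomputable def genE (σ : Representation (ZMod p) G V) :
    Submodule (ZMod p) (Module.End (ZMod p) V) :=
  Submodule.span (ZMod p) (Set.range fun g : G => (σ g : Module.End (ZMod p) V) - 1)

lemma sub_one_mem_genE (σ : Representation (ZMod p) G V) (g : G) :
    (σ g : Module.End (ZMod p) V) - 1 ∈ genE σ :=
  Submodule.subset_span ⟨g, rfl⟩

/-- The subspace spanned by all values `f v` with `f ∈ E`. -/
noncomputable def apSub (E : Submodule (ZMod p) (Module.End (ZMod p) V)) :
    Submodule (ZMod p) V :=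
  Submodule.span (ZMod p) {x | ∃ f ∈ E, ∃ v : V, f v = x}

lemma apply_mem_apSub {E : Submodule (ZMod p) (Module.End (ZMod p) V)}
    {f : Module.End (ZMod p) V} (hf : f ∈ E) (v : V) : f v ∈ apSub E :=
  Submodule.subset_span ⟨f, hf, v, rfl⟩

lemma apSub_le {E : Submodule (ZMod p) (Module.End (ZMod p) V)} {P : Submodule (ZMod p) V}
    (h : ∀ f ∈ E, ∀ v : V, f v ∈ P) : apSub E ≤ P := by
  rw [apSub, Submodule.span_le]
  rintro x ⟨f, hf, v, rfl⟩
  exact h f hf v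

lemma apply_apSub_mem_mul {E F : Submodule (ZMod p) (Module.End (ZMod p) V)}
    {f : Module.End (ZMod p) V} (hf : f ∈ E) {w : V} (hw : w ∈ apSub F) :
    f w ∈ apSub (E * F) := by
  rw [apSub] at hw
  induction hw using Submodule.span_induction with
  | mem x hx =>
    obtain ⟨g', hg', v, rfl⟩ := hx
    rw [← Module.End.mul_apply]
    exact apply_mem_apSub (Submodule.mul_mem_mul hf hg') v
  | zero => rw [map_zero]; exact zero_mem _
  | add x y _ _ hx hy => rw [map_add]; exact add_mem hx hy
  | smul a x _ hx => rw [map_smul]; exact Submodule.smul_mem _ _ hx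

lemma apply_mem_pow_add {E : Submodule (ZMod p) (Module.End (ZMod p) V)}
    {f : Module.End (ZMod p) V} {a b : ℕ} (hf : f ∈ E ^ a) {w : V} (hw : w ∈ apSub (E ^ b)) :
    f w ∈ apSub (E ^ (a + b)) := by
  have hp : E ^ (a + b) = E ^ a * E ^ b := pow_add E a b
  rw [hp]; exact apply_apSub_mem_mul hf hw

lemma apSub_pow_succ_le (E : Submodule (ZMod p) (Module.End (ZMod p) V)) (s : ℕ) :
    apSub (E ^ (s + 1)) ≤ apSub (E ^ s) := by
  refine apSub_le ?_
  intro f hf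
  have hp : E ^ (s + 1) = E ^ s * E := pow_succ E s
  rw [hp] at hf
  refine Submodule.mul_induction_on (C := fun f => ∀ v : V, f v ∈ apSub (E ^ s)) hf ?_ ?_
  · intro x hx y _ v
    rw [Module.End.mul_apply]
    exact apply_mem_apSub hx _
  · intro x y hx hy v
    rw [LinearMap.add_apply]
    exact add_mem (hx v) (hy v)

lemma apSub_pow_le_of_le (E : Submodule (ZMod p) (Module.End (ZMod p) V)) {s t : ℕ}
    (h : s ≤ t) : apSub (E ^ t) ≤ apSub (E ^ s) := by
  induction t, h using Nat.le_induction with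
  | base => exact le_rfl
  | succ t _ ih => exact (apSub_pow_succ_le E t).trans ih

lemma top_le_apSub_pow_zero (E : Submodule (ZMod p) (Module.End (ZMod p) V)) :
    ⊤ ≤ apSub (E ^ 0) := by
  intro x _
  have h1 : (1 : Module.End (ZMod p) V) ∈ E ^ 0 := by
    have hp : E ^ 0 = (1 : Submodule (ZMod p) (Module.End (ZMod p) V)) := pow_zero E
    rw [hp]
    exact Submodule.one_le.mp le_rfl
  simpa using apply_mem_apSub h1 x

lemma pow_succ_le_target (σ : Representation (ZMod p) G V) (s : ℕ) (P : Submodule (ZMod p) V)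
    (h : ∀ g : G, ∀ w ∈ apSub (genE σ ^ s), ((σ g : Module.End (ZMod p) V) - 1) w ∈ P) :
    apSub (genE σ ^ (s + 1)) ≤ P := by
  refine apSub_le ?_
  intro f hf
  have hp : genE σ ^ (s + 1) = genE σ * genE σ ^ s := pow_succ' (genE σ) s
  rw [hp] at hf
  refine Submodule.mul_induction_on (C := fun f => ∀ v : V, f v ∈ P) hf ?_ ?_
  · intro x hx y hy v
    rw [Module.End.mul_apply]
    have hyv : y v ∈ apSub (genE σ ^ s) := apply_mem_apSub hy v
    rw [genE] at hx
    induction hx using Submodule.span_induction with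
    | mem x hx => obtain ⟨g, rfl⟩ := hx; exact h g _ hyv
    | zero => rw [LinearMap.zero_apply]; exact zero_mem _
    | add x₁ x₂ _ _ h1 h2 => rw [LinearMap.add_apply]; exact add_mem h1 h2
    | smul a x _ h1 => rw [LinearMap.smul_apply]; exact Submodule.smul_mem _ _ h1
  · intro x y hx hy v
    rw [LinearMap.add_apply]
    exact add_mem (hx v) (hy v)



/-- iterated application of the augmentation operators -/
noncomputable def fiter (σ : Representation (ZMod p) G V) : ℕ → Submodule (ZMod p) V
  | 0 => ⊤
  | s + 1 => Submodule.span (ZMod p)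
      {x | ∃ g : G, ∃ w ∈ fiter σ s, ((σ g : Module.End (ZMod p) V) - 1) w = x}

lemma apSub_pow_le_fiter (σ : Representation (ZMod p) G V) (s : ℕ) :
    apSub (genE σ ^ s) ≤ fiter σ s := by
  induction s with
  | zero => exact le_top
  | succ s ih =>
    refine pow_succ_le_target σ s _ ?_
    intro g w hw
    exact Submodule.subset_span ⟨g, w, ih hw, rfl⟩

lemma quotInvariants_mk (σ : Representation (ZMod p) G V) (g : G) (w : V) :
    σ.quotInvariants g (Submodule.Quotient.mk w) =
      (Submodule.Quotient.mk (σ g w) : V ⧸ σ.invariants) := by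
  simp [Representation.quotInvariants, Submodule.mapQ_apply]

lemma quotInvariants_sub_one_mk (σ : Representation (ZMod p) G V) (g : G) (w : V) :
    ((σ.quotInvariants g : Module.End (ZMod p) (V ⧸ σ.invariants)) - 1)
        (Submodule.Quotient.mk w) =
      (Submodule.Quotient.mk (((σ g : Module.End (ZMod p) V) - 1) w) : V ⧸ σ.invariants) := by
  rw [LinearMap.sub_apply, Module.End.one_apply, quotInvariants_mk, LinearMap.sub_apply,
    Module.End.one_apply, ← Submodule.Quotient.mk_sub]

lemma fiter_map (σ : Representation (ZMod p) G V) (s : ℕ) :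
    Submodule.map σ.invariants.mkQ (fiter σ s) = fiter σ.quotInvariants s := by
  induction s with
  | zero =>
    rw [fiter, fiter, Submodule.map_top, Submodule.range_mkQ]
  | succ s ih =>
    rw [fiter, fiter, Submodule.map_span]
    congr 1
    ext x
    constructor
    · rintro ⟨y, ⟨g, w, hw, rfl⟩, rfl⟩
      refine ⟨g, Submodule.Quotient.mk w, ?_, ?_⟩
      · rw [← ih]
        exact ⟨w, hw, rfl⟩
      · rw [quotInvariants_sub_one_mk]
        rfl
    · rintro ⟨g, w', hw', rfl⟩
      rw [← ih] at hw'
      obtain ⟨w, hw, rfl⟩ := hw'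
      refine ⟨((σ g : Module.End (ZMod p) V) - 1) w, ⟨g, w, hw, rfl⟩, ?_⟩
      rw [Submodule.mkQ_apply, Submodule.mkQ_apply, quotInvariants_sub_one_mk]

lemma exists_ne_zero_fixed (σ : Representation (ZMod p) G V) (hG : ∀ g : G, g ^ p = 1)
    [FiniteDimensional (ZMod p) V] [Nontrivial V] :
    ∃ v : V, v ≠ 0 ∧ ∀ g : G, σ g v = v := by
  letI : MulAction G V :=
    { smul := fun g v => σ g v
      one_smul := fun v => by show σ 1 v = v; simp
      mul_smul := fun g h v => by show σ (g * h) v = σ g (σ h v); simp [map_mul] }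
  haveI : Finite V := Module.finite_of_finite (ZMod p)
  have hp : IsPGroup p G := fun g => ⟨1, by rw [pow_one]; exact hG g⟩
  have hmod := hp.card_modEq_card_fixedPoints V
  have hcardV : Nat.card V = p ^ Module.finrank (ZMod p) V := by
    haveI : Fintype V := Fintype.ofFinite V
    rw [Nat.card_eq_fintype_card, card_eq_pow_finrank (K := ZMod p), ZMod.card]
  have hrpos : 0 < Module.finrank (ZMod p) V := Module.finrank_pos
  have hdvdV : p ∣ Nat.card V := by
    rw [hcardV]
    exact dvd_pow_self p hrpos.ne'
  have hdvd : p ∣ Nat.card (MulAction.fixedPoints G V) := by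
    have := (Nat.modEq_zero_iff_dvd.mpr hdvdV).symm.trans hmod
    exact Nat.modEq_zero_iff_dvd.mp this.symm
  have hzero : (0 : V) ∈ MulAction.fixedPoints G V := by
    intro g
    show σ g 0 = 0
    simp
  have hpos : 0 < Nat.card (MulAction.fixedPoints G V) :=
    Nat.card_pos_iff.mpr ⟨⟨⟨0, hzero⟩⟩, inferInstance⟩
  have hone_lt : 1 < Nat.card (MulAction.fixedPoints G V) := by
    have hple : p ≤ Nat.card (MulAction.fixedPoints G V) := Nat.le_of_dvd hpos hdvd
    exact lt_of_lt_of_le (Fact.out (p := p.Prime)).one_lt hple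
  haveI : Nontrivial (MulAction.fixedPoints G V) :=
    Finite.one_lt_card_iff_nontrivial.mp hone_lt
  obtain ⟨x, y, hxy⟩ := exists_pair_ne (MulAction.fixedPoints G V)
  by_cases hx : (x : V) = 0
  · refine ⟨y, ?_, fun g => y.2 g⟩
    intro hy0
    exact hxy (Subtype.ext (by rw [hx, hy0]))
  · exact ⟨x, hx, fun g => x.2 g⟩

lemma fiter_nilpotent (hG : ∀ g : G, g ^ p = 1) :
    ∀ (n : ℕ) (W : Type u) [AddCommGroup W] [Module (ZMod p) W]
      (σ : Representation (ZMod p) G W) [FiniteDimensional (ZMod p) W],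
      Module.finrank (ZMod p) W ≤ n → ∃ L, fiter σ L = ⊥ := by
  intro n
  induction n with
  | zero =>
    intro W _ _ σ _ hr
    haveI : Subsingleton W := by
      rw [← Module.finrank_zero_iff (R := ZMod p)]
      omega
    exact ⟨0, by rw [fiter]; exact Subsingleton.elim _ _⟩
  | succ n ih =>
    intro W _ _ σ _ hr
    by_cases hW : Subsingleton W
    · exact ⟨0, by rw [fiter]; exact Subsingleton.elim _ _⟩
    · haveI : Nontrivial W := not_subsingleton_iff_nontrivial.mp hW
      obtain ⟨v, hv0, hvfix⟩ := exists_ne_zero_fixed σ hG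
      have hSnt : Nontrivial σ.invariants := by
        refine ⟨⟨⟨v, hvfix⟩, 0, ?_⟩⟩
        intro h
        exact hv0 (congrArg Subtype.val h)
      have hfr : Module.finrank (ZMod p) (W ⧸ σ.invariants) ≤ n := by
        have h1 := Submodule.finrank_quotient_add_finrank σ.invariants
        have h2 : 0 < Module.finrank (ZMod p) σ.invariants := Module.finrank_pos
        omega
      obtain ⟨L, hL⟩ := ih (W ⧸ σ.invariants) σ.quotInvariants hfr
      refine ⟨L + 1, ?_⟩
      have hle : fiter σ L ≤ σ.invariants := by
        intro x hx
        have hmem : σ.invariants.mkQ x ∈ Submodule.map σ.invariants.mkQ (fiter σ L) :=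
          Submodule.mem_map_of_mem hx
        rw [fiter_map, hL] at hmem
        rw [Submodule.mem_bot] at hmem
        rwa [Submodule.mkQ_apply, Submodule.Quotient.mk_eq_zero] at hmem
      rw [fiter, Submodule.span_eq_bot]
      rintro x ⟨g, w, hw, rfl⟩
      have hwi : w ∈ σ.invariants := hle hw
      rw [LinearMap.sub_apply, Module.End.one_apply]
      rw [Representation.mem_invariants] at hwi
      rw [hwi g, sub_self]


lemma one_mem_pow_zero (E : Submodule (ZMod p) (Module.End (ZMod p) V)) :
    (1 : Module.End (ZMod p) V) ∈ E ^ 0 := by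
  have hp : E ^ 0 = (1 : Submodule (ZMod p) (Module.End (ZMod p) V)) := pow_zero E
  rw [hp]
  exact Submodule.one_le.mp le_rfl

lemma mem_pow_of_mem {E : Submodule (ZMod p) (Module.End (ZMod p) V)}
    {x : Module.End (ZMod p) V} (hx : x ∈ E) : ∀ n : ℕ, x ^ n ∈ E ^ n := by
  intro n
  induction n with
  | zero =>
    have h1 : x ^ 0 = 1 := pow_zero x
    rw [h1]
    exact one_mem_pow_zero E
  | succ n ih =>
    have hp : E ^ (n + 1) = E ^ n * E := pow_succ E n
    have hx' : x ^ (n + 1) = x ^ n * x := pow_succ x n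
    rw [hp, hx']
    exact Submodule.mul_mem_mul ih hx

section Core

variable {H : Type*} [CommGroup H]

set_option maxHeartbeats 2000000 in
lemma core (σ : Representation (ZMod p) H V) (hG : ∀ g : H, g ^ p = 1)
    [FiniteDimensional (ZMod p) V] :
    Module.finrank (ZMod p) V ≤
      Module.finrank (ZMod p) (V ⧸ apSub (genE σ ^ 2)) *
        p ^ (Module.finrank (ZMod p) (V ⧸ apSub (genE σ ^ 2)) *
             Module.finrank (ZMod p) (V ⧸ apSub (genE σ ^ 2))) := by
  classical
  by_cases hV : Subsingleton V
  · haveI : Subsingleton V := hV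
    have h0 : Module.finrank (ZMod p) V = 0 := Module.finrank_zero_of_subsingleton
    omega
  haveI : Nontrivial V := not_subsingleton_iff_nontrivial.mp hV
  have hppos : 0 < p := (Fact.out (p := p.Prime)).pos
  set J2 := apSub (genE σ ^ 2) with hJ2def
  set a := Module.finrank (ZMod p) (V ⧸ J2) with hadef
  have hcommσ : ∀ g h : H, Commute (σ g : Module.End (ZMod p) V) (σ h) := by
    intro g h
    show σ g * σ h = σ h * σ g
    rw [← map_mul, ← map_mul, mul_comm]
  -- stability of J2
  have hstab : ∀ (g : H), ∀ x ∈ J2, ((σ g : Module.End (ZMod p) V) - 1) x ∈ J2 := by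
    intro g x hx
    have h1 : (σ g : Module.End (ZMod p) V) - 1 ∈ genE σ ^ 1 := by
      have hp1 : genE σ ^ 1 = genE σ := pow_one _
      rw [hp1]; exact sub_one_mem_genE σ g
    exact apSub_pow_le_of_le (genE σ) (by omega) (apply_mem_pow_add h1 hx)
  -- the family of quotient operators
  set Ψ : H → Module.End (ZMod p) (V ⧸ J2) := fun g =>
    Submodule.mapQ J2 J2 ((σ g : Module.End (ZMod p) V) - 1)
      (fun x hx => hstab g x hx) with hΨdef
  have hΨapp : ∀ (g : H) (x : V),
      Ψ g (Submodule.Quotient.mk x) =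
        Submodule.Quotient.mk (((σ g : Module.End (ZMod p) V) - 1) x) := by
    intro g x
    simp [hΨdef, Submodule.mapQ_apply]
  -- extract a small spanning family
  obtain ⟨bs, hbs_sub, hbs_span, hbs_ind⟩ :=
    exists_linearIndependent (ZMod p) (Set.range Ψ)
  have hfin : bs.Finite := hbs_ind.setFinite
  haveI : Fintype bs := hfin.fintype
  set m := bs.toFinset.card with hmdef
  have hm : m ≤ a * a := by
    have h1 : Module.finrank (ZMod p) (Submodule.span (ZMod p) bs) = m :=
      finrank_span_set_eq_card hbs_ind
    have h2 : Module.finrank (ZMod p) (Submodule.span (ZMod p) bs) ≤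
        Module.finrank (ZMod p) (Module.End (ZMod p) (V ⧸ J2)) :=
      Submodule.finrank_le _
    have h3 : Module.finrank (ZMod p) (Module.End (ZMod p) (V ⧸ J2)) = a * a :=
      Module.finrank_linearMap (ZMod p) (ZMod p) (V ⧸ J2) (V ⧸ J2)
    omega
  set e := bs.toFinset.equivFin with hedef
  have hsel : ∀ i : Fin m,
      ∃ g : H, Ψ g = ((e.symm i : bs.toFinset) : Module.End (ZMod p) (V ⧸ J2)) := by
    intro i
    have hmem : ((e.symm i : bs.toFinset) : Module.End (ZMod p) (V ⧸ J2)) ∈ bs :=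
      Set.mem_toFinset.mp (e.symm i).2
    exact hbs_sub hmem
  choose gsel hgsel using hsel
  set Y : Fin m → Module.End (ZMod p) V := fun i => (σ (gsel i) : Module.End (ZMod p) V) - 1
    with hYdef
  have hbs_eq : bs = Set.range fun i => Ψ (gsel i) := by
    ext y
    constructor
    · intro hy
      refine ⟨e ⟨y, Set.mem_toFinset.mpr hy⟩, ?_⟩
      dsimp only
      rw [hgsel, Equiv.symm_apply_apply]
    · rintro ⟨i, rfl⟩
      dsimp only
      rw [hgsel]
      exact Set.mem_toFinset.mp (e.symm i).2
  -- decomposition of a general operator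
  have hdecomp : ∀ g : H, ∃ c : Fin m → ZMod p, ∀ x : V,
      (((σ g : Module.End (ZMod p) V) - 1) - ∑ i, c i • Y i) x ∈ J2 := by
    intro g
    have h1 : Ψ g ∈ Submodule.span (ZMod p) bs := by
      rw [hbs_span]
      exact Submodule.subset_span ⟨g, rfl⟩
    rw [hbs_eq, mem_span_range_iff_exists_fun] at h1
    obtain ⟨c, hc⟩ := h1
    refine ⟨c, fun x => ?_⟩
    have h2 := congrArg (fun F : Module.End (ZMod p) (V ⧸ J2) =>
      F (Submodule.Quotient.mk x)) hc
    simp only [LinearMap.sum_apply, LinearMap.smul_apply, hΨapp] at h2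
    have h3 : (∑ i, c i • (Submodule.Quotient.mk (Y i x) : V ⧸ J2)) =
        Submodule.Quotient.mk (∑ i, c i • Y i x) := by
      simp only [← Submodule.mkQ_apply, ← map_smul, ← map_sum]
    rw [h3] at h2
    have h4 : (Submodule.Quotient.mk (((σ g : Module.End (ZMod p) V) - 1) x
        - ∑ i, c i • Y i x) : V ⧸ J2) = 0 := by
      rw [Submodule.Quotient.mk_sub, h2, sub_self]
    rw [Submodule.Quotient.mk_eq_zero] at h4
    have h5 : (((σ g : Module.End (ZMod p) V) - 1) - ∑ i, c i • Y i) x =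
        ((σ g : Module.End (ZMod p) V) - 1) x - ∑ i, c i • Y i x := by
      rw [LinearMap.sub_apply, LinearMap.sum_apply]
      simp [LinearMap.smul_apply]
    rw [h5]
    exact h4
  -- the commutative subalgebra generated by the image of σ
  set CA : Subalgebra (ZMod p) (Module.End (ZMod p) V) :=
    Algebra.adjoin (ZMod p) (Set.range fun g : H => (σ g : Module.End (ZMod p) V)) with hCAdef
  have hσmem : ∀ g : H, (σ g : Module.End (ZMod p) V) ∈ CA := fun g =>
    Algebra.subset_adjoin ⟨g, rfl⟩
  have hYmemCA : ∀ i : Fin m, Y i ∈ CA := by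
    intro i
    rw [hYdef]
    exact Subalgebra.sub_mem _ (hσmem (gsel i)) (Subalgebra.one_mem _)
  have hCAcomm : ∀ x y : ↥CA, x * y = y * x := by
    intro x y
    refine Subtype.ext ?_
    show (x : Module.End (ZMod p) V) * y = (y : Module.End (ZMod p) V) * x
    refine Algebra.commute_of_mem_adjoin_of_forall_mem_commute y.2 ?_
    rintro b ⟨h, rfl⟩
    exact (Algebra.commute_of_mem_adjoin_of_forall_mem_commute x.2
      (by rintro b' ⟨g, rfl⟩; exact hcommσ h g)).symm
  letI : CommMonoid ↥CA := { (inferInstance : Monoid ↥CA) with mul_comm := hCAcomm }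
  set YC : Fin m → CA := fun i => ⟨Y i, hYmemCA i⟩ with hYCdef
  have hcoeY : ∀ i, ((YC i : CA) : Module.End (ZMod p) V) = Y i := fun i => rfl
  haveI : CharP (Module.End (ZMod p) V) p :=
    charP_of_injective_algebraMap (algebraMap (ZMod p) (Module.End (ZMod p) V)).injective p
  have hYpow : ∀ i : Fin m, YC i ^ p = 0 := by
    intro i
    have h1 : ((YC i ^ p : CA) : Module.End (ZMod p) V) = (Y i) ^ p := by
      rw [← hcoeY i]
      exact SubmonoidClass.coe_pow _ _
    have h2 : (Y i) ^ p = 0 := by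
      have h3 : ((σ (gsel i) : Module.End (ZMod p) V) - 1) ^ p =
          (σ (gsel i) : Module.End (ZMod p) V) ^ p - 1 ^ p :=
        sub_pow_char_of_commute p (Commute.one_right _)
      rw [hYdef]
      dsimp only
      rw [h3, ← map_pow, hG, map_one, one_pow, sub_self]
    have h4 : ((YC i ^ p : CA) : Module.End (ZMod p) V) = ((0 : CA) : Module.End (ZMod p) V) := by
      rw [h1, h2]; rfl
    exact Subtype.ext h4
  -- monomials
  set mon : (Fin m → ℕ) → CA := fun α => ∏ i, YC i ^ α i with hmondef
  have hmonmem : ∀ α : Fin m → ℕ,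
      ((mon α : CA) : Module.End (ZMod p) V) ∈ genE σ ^ (∑ i, α i) := by
    intro α
    rw [hmondef]
    dsimp only
    have key : ∀ s : Finset (Fin m),
        ((∏ i ∈ s, YC i ^ α i : CA) : Module.End (ZMod p) V) ∈ genE σ ^ (∑ i ∈ s, α i) := by
      intro s
      induction s using Finset.induction_on with
      | empty =>
        rw [Finset.prod_empty, Finset.sum_empty, OneMemClass.coe_one]
        exact one_mem_pow_zero (genE σ)
      | insert i s hns ih =>
        rw [Finset.prod_insert hns, Finset.sum_insert hns]
        have hpadd : genE σ ^ (α i + ∑ j ∈ s, α j) =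
            genE σ ^ α i * genE σ ^ (∑ j ∈ s, α j) := pow_add (genE σ) _ _
        have hcp : ((YC i ^ α i : CA) : Module.End (ZMod p) V) = (Y i) ^ α i := by
          rw [← hcoeY i]; exact SubmonoidClass.coe_pow _ _
        have hYiE : Y i ∈ genE σ := by
          rw [hYdef]; exact sub_one_mem_genE σ (gsel i)
        rw [hpadd, MulMemClass.coe_mul, hcp]
        exact Submodule.mul_mem_mul (mem_pow_of_mem hYiE _) ih
    exact key Finset.univ
  -- lifts of a basis of the quotient
  have hvvex : ∀ j : Fin a, ∃ x : V,
      (Submodule.Quotient.mk x : V ⧸ J2) = Module.finBasis (ZMod p) (V ⧸ J2) j := fun j =>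
    Submodule.Quotient.mk_surjective J2 _
  choose vv hvvspec using hvvex
  have hspan0 : ∀ x : V, ∃ y ∈ Submodule.span (ZMod p) (Set.range vv), x - y ∈ J2 := by
    intro x
    have h1 : (Submodule.Quotient.mk x : V ⧸ J2) ∈
        Submodule.span (ZMod p) (Set.range ⇑(Module.finBasis (ZMod p) (V ⧸ J2))) := by
      rw [Basis.span_eq]; trivial
    have h2 : Set.range ⇑(Module.finBasis (ZMod p) (V ⧸ J2)) = ⇑J2.mkQ '' Set.range vv := by
      rw [← Set.range_comp]
      apply congrArg
      funext j
      simp only [Function.comp_apply, Submodule.mkQ_apply]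
      exact (hvvspec j).symm
    rw [h2, ← Submodule.map_span] at h1
    obtain ⟨y, hy, hyx⟩ := h1
    refine ⟨y, hy, ?_⟩
    have h3 : (Submodule.Quotient.mk (x - y) : V ⧸ J2) = 0 := by
      rw [Submodule.Quotient.mk_sub, ← hyx, Submodule.mkQ_apply, sub_self]
    rwa [Submodule.Quotient.mk_eq_zero] at h3
  -- graded monomial spans
  set Mon : ℕ → Submodule (ZMod p) V := fun s => Submodule.span (ZMod p)
    {x | ∃ α : Fin m → ℕ, (∀ i, α i < p) ∧ s ≤ ∑ i, α i ∧ ∃ j : Fin a,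
      ((mon α : CA) : Module.End (ZMod p) V) (vv j) = x} with hMondef
  have hMonMono : ∀ s, Mon s ≤ Mon 0 := by
    intro s
    refine Submodule.span_mono ?_
    rintro x ⟨α, h1, _, j, hx⟩
    exact ⟨α, h1, Nat.zero_le _, j, hx⟩
  -- the central induction
  have hC : ∀ s : ℕ, apSub (genE σ ^ s) ≤ Mon s ⊔ apSub (genE σ ^ (s + 1)) := by
    intro s
    induction s with
    | zero =>
      refine le_trans le_top ?_
      intro x _
      obtain ⟨y, hy, hxy⟩ := hspan0 x
      have hyMon : y ∈ Mon 0 := by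
        have hsub : Submodule.span (ZMod p) (Set.range vv) ≤ Mon 0 := by
          refine Submodule.span_le.mpr ?_
          rintro z ⟨j, rfl⟩
          refine Submodule.subset_span ⟨0, fun i => hppos, Nat.zero_le _, j, ?_⟩
          have hmon1 : (mon 0 : CA) = 1 := by
            rw [hmondef]; simp
          rw [hmon1]
          simp
        exact hsub hy
      have hxJ : x - y ∈ apSub (genE σ ^ (0 + 1)) :=
        apSub_pow_le_of_le (genE σ) (by omega) hxy
      have hx : x = y + (x - y) := by abel
      rw [hx]
      exact Submodule.add_mem _ (Submodule.mem_sup_left hyMon) (Submodule.mem_sup_right hxJ)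
    | succ s ih =>
      refine pow_succ_le_target σ s _ ?_
      intro g w hw
      obtain ⟨w₁, hw₁, w₂, hw₂, rfl⟩ := Submodule.mem_sup.mp (ih hw)
      rw [map_add]
      refine Submodule.add_mem _ ?_ ?_
      · -- main term : w₁ ∈ Mon s
        obtain ⟨c, hc⟩ := hdecomp g
        set κE : Module.End (ZMod p) V :=
          ((σ g : Module.End (ZMod p) V) - 1) - ∑ i, c i • Y i with hκdef
        have hκJ2 : ∀ x : V, κE x ∈ J2 := fun x => hc x
        have hκcommσ : ∀ h : H, Commute κE (σ h : Module.End (ZMod p) V) := by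
          intro h
          refine Commute.sub_left ?_ ?_
          · exact Commute.sub_left (hcommσ g h) (Commute.one_left _)
          · refine Commute.sum_left _ _ _ fun i _ => ?_
            refine Commute.smul_left ?_ _
            rw [hYdef]
            exact Commute.sub_left (hcommσ (gsel i) h) (Commute.one_left _)
        have hκmon : ∀ α : Fin m → ℕ,
            Commute κE ((mon α : CA) : Module.End (ZMod p) V) := by
          intro α
          refine Algebra.commute_of_mem_adjoin_of_forall_mem_commute (mon α).2 ?_
          rintro b ⟨h, rfl⟩
          exact hκcommσ h
        have hop : ((σ g : Module.End (ZMod p) V) - 1) = κE + ∑ i, c i • Y i := by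
          rw [hκdef]; abel
        clear hw
        induction hw₁ using Submodule.span_induction with
        | mem x hx =>
          obtain ⟨α, hαlt, hαsum, j, rfl⟩ := hx
          rw [hop, LinearMap.add_apply]
          refine Submodule.add_mem _ ?_ ?_
          · -- κ term
            have hswap : κE (((mon α : CA) : Module.End (ZMod p) V) (vv j)) =
                ((mon α : CA) : Module.End (ZMod p) V) (κE (vv j)) := by
              rw [← Module.End.mul_apply, ← Module.End.mul_apply, (hκmon α).eq]
            rw [hswap]
            have hmem2 := apply_mem_pow_add (hmonmem α) (hκJ2 (vv j))
            refine Submodule.mem_sup_right (apSub_pow_le_of_le _ ?_ hmem2)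
            omega
          · -- sum of Y terms
            rw [LinearMap.sum_apply]
            refine Submodule.sum_mem _ ?_
            intro i _
            rw [LinearMap.smul_apply]
            refine Submodule.smul_mem _ _ ?_
            have hYapp : (Y i) (((mon α : CA) : Module.End (ZMod p) V) (vv j)) =
                ((YC i * mon α : CA) : Module.End (ZMod p) V) (vv j) := by
              rw [MulMemClass.coe_mul, hcoeY, Module.End.mul_apply]
            by_cases hcase : α i + 1 < p
            · -- still a monomial
              have hmul : YC i * mon α = mon (Function.update α i (α i + 1)) := by
                rw [hmondef]
                dsimp only
                rw [← Finset.mul_prod_erase Finset.univ (fun i' => YC i' ^ α i')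
                    (Finset.mem_univ i),
                  ← Finset.mul_prod_erase Finset.univ
                    (fun i' => YC i' ^ Function.update α i (α i + 1) i') (Finset.mem_univ i)]
                rw [Function.update_self, ← mul_assoc, ← pow_succ']
                congr 1
                refine Finset.prod_congr rfl fun i' hi' => ?_
                rw [Function.update_of_ne (Finset.ne_of_mem_erase hi')]
              refine Submodule.mem_sup_left (Submodule.subset_span
                ⟨Function.update α i (α i + 1), ?_, ?_, j, ?_⟩)
              · intro i'
                by_cases hii : i' = i
                · subst hii; rw [Function.update_self]; exact hcase
                · rw [Function.update_of_ne hii]; exact hαlt i'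
              · rw [Finset.sum_update_of_mem (Finset.mem_univ i),
                  Finset.sdiff_singleton_eq_erase]
                have hsplit : α i + ∑ i' ∈ Finset.univ.erase i, α i' = ∑ i', α i' :=
                  Finset.add_sum_erase Finset.univ α (Finset.mem_univ i)
                omega
              · rw [hYapp, hmul]
            · -- the monomial dies
              have hαp : α i + 1 = p := by
                have := hαlt i
                omega
              have hzero : YC i * mon α = 0 := by
                rw [hmondef]
                dsimp only
                rw [← Finset.mul_prod_erase Finset.univ (fun i' => YC i' ^ α i')
                    (Finset.mem_univ i), ← mul_assoc, ← pow_succ', hαp, hYpow i, zero_mul]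
              rw [hYapp, hzero]
              simp only [ZeroMemClass.coe_zero, LinearMap.zero_apply]
              exact zero_mem _
        | zero => rw [map_zero]; exact zero_mem _
        | add x y _ _ hx hy => rw [map_add]; exact Submodule.add_mem _ hx hy
        | smul t x _ hx => rw [map_smul]; exact Submodule.smul_mem _ _ hx
      · -- error term : w₂ ∈ apSub (E ^ (s+1))
        have h1 : (σ g : Module.End (ZMod p) V) - 1 ∈ genE σ ^ 1 := by
          have hp1 : genE σ ^ 1 = genE σ := pow_one _
          rw [hp1]; exact sub_one_mem_genE σ g
        have h2 := apply_mem_pow_add h1 hw₂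
        have harith : 1 + (s + 1) = s + 2 := by omega
        rw [harith] at h2
        exact Submodule.mem_sup_right h2
  -- chaining
  have hchain : ∀ s : ℕ, (⊤ : Submodule (ZMod p) V) ≤ Mon 0 ⊔ apSub (genE σ ^ s) := by
    intro s
    induction s with
    | zero => exact le_trans (top_le_apSub_pow_zero (genE σ)) le_sup_right
    | succ s ih =>
      refine le_trans ih (sup_le le_sup_left (le_trans (hC s) (sup_le ?_ le_sup_right)))
      exact le_trans (hMonMono s) le_sup_left
  obtain ⟨L, hL⟩ := fiter_nilpotent hG (Module.finrank (ZMod p) V) V σ le_rfl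
  have htop : (⊤ : Submodule (ZMod p) V) ≤ Mon 0 := by
    refine le_trans (hchain L) (sup_le le_rfl ?_)
    have h1 := apSub_pow_le_fiter σ L
    rw [hL] at h1
    exact le_trans h1 bot_le
  -- counting
  set fam : Fin a × (Fin m → Fin p) → V := fun q =>
    ((mon (fun i => ((q.2 i : ℕ))) : CA) : Module.End (ZMod p) V) (vv q.1) with hfamdef
  have hfamspan : Submodule.span (ZMod p) (Set.range fam) = ⊤ := by
    refine le_antisymm le_top (le_trans htop ?_)
    rw [hMondef]
    refine Submodule.span_le.mpr ?_
    rintro x ⟨α, hαlt, _, j, rfl⟩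
    refine Submodule.subset_span ⟨⟨j, fun i => ⟨α i, hαlt i⟩⟩, ?_⟩
    rw [hfamdef]
  have hcount := finrank_le_of_span_eq_top hfamspan
  have hcard : Fintype.card (Fin a × (Fin m → Fin p)) = a * p ^ m := by
    simp [Fintype.card_prod, Fintype.card_fun]
  rw [hcard] at hcount
  refine le_trans hcount ?_
  have hpow : p ^ m ≤ p ^ (a * a) := Nat.pow_le_pow_right hppos hm
  exact Nat.mul_le_mul_left a hpow

end Core


/-- The restriction of a representation to an invariant submodule. -/
noncomputable def subRep (ρ : Representation (ZMod p) G V) (M : Submodule (ZMod p) V)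
    (h : ∀ g : G, ∀ v ∈ M, ρ g v ∈ M) : Representation (ZMod p) G ↥M where
  toFun g := (ρ g).restrict (h g)
  map_one' := by
    ext x
    simp [LinearMap.restrict_apply]
  map_mul' g g' := by
    ext x
    simp [LinearMap.restrict_apply, map_mul]

lemma subRep_apply (ρ : Representation (ZMod p) G V) (M : Submodule (ZMod p) V)
    (h : ∀ g : G, ∀ v ∈ M, ρ g v ∈ M) (g : G) (x : ↥M) :
    ((subRep ρ M h g x : ↥M) : V) = ρ g (x : V) := rfl

/-- The second socle: vectors killed by two augmentation operators. -/
noncomputable def soc2 (σ : Representation (ZMod p) G V) : Submodule (ZMod p) V where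
  carrier := {x | ∀ g h : G,
    ((σ g : Module.End (ZMod p) V) - 1) (((σ h : Module.End (ZMod p) V) - 1) x) = 0}
  add_mem' := by
    intro x y hx hy
    intro g h
    rw [map_add, map_add, hx g h, hy g h, add_zero]
  zero_mem' := by
    intro g h
    rw [map_zero, map_zero]
  smul_mem' := by
    intro cc x hx
    intro g h
    rw [map_smul, map_smul, hx g h, smul_zero]

lemma mem_soc2 (σ : Representation (ZMod p) G V) (x : V) :
    x ∈ soc2 σ ↔ ∀ g h : G,
      ((σ g : Module.End (ZMod p) V) - 1) (((σ h : Module.End (ZMod p) V) - 1) x) = 0 :=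
  Iff.rfl

section Soc2Bound

variable {H : Type*} [CommGroup H]

set_option maxHeartbeats 1000000 in
lemma soc2_bound (σ : Representation (ZMod p) H V) (hG : ∀ g : H, g ^ p = 1)
    [FiniteDimensional (ZMod p) V] :
    Module.finrank (ZMod p) V ≤ Module.finrank (ZMod p) (soc2 σ) *
      p ^ (Module.finrank (ZMod p) (soc2 σ) * Module.finrank (ZMod p) (soc2 σ)) := by
  classical
  set δ : Representation (ZMod p) H (Module.Dual (ZMod p) V) := σ.dual with hδdef
  haveI : FiniteDimensional (ZMod p) (Module.Dual (ZMod p) V) := inferInstance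
  have e1 : ∀ (a : H) (ψ : Module.Dual (ZMod p) V) (y : V), (δ a ψ) y = ψ (σ a⁻¹ y) := fun a ψ y => rfl
  have hval : ∀ (g h : H) (φ : Module.Dual (ZMod p) V) (x : V),
      ((((δ g : Module.End (ZMod p) (Module.Dual (ZMod p) V)) - 1) (((δ h : Module.End (ZMod p) (Module.Dual (ZMod p) V)) - 1) φ)) x) =
        φ (((σ g⁻¹ : Module.End (ZMod p) V) - 1) (((σ h⁻¹ : Module.End (ZMod p) V) - 1) x)) := by
    intro g h φ x
    have h2 : ((((δ g : Module.End (ZMod p) (Module.Dual (ZMod p) V)) - 1) (((δ h : Module.End (ZMod p) (Module.Dual (ZMod p) V)) - 1) φ)) x)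
        = φ (σ h⁻¹ (σ g⁻¹ x)) - φ (σ g⁻¹ x) - φ (σ h⁻¹ x) + φ x := by
      simp only [LinearMap.sub_apply, Module.End.one_apply, map_sub, e1]
      ring
    have h3 : ((σ g⁻¹ : Module.End (ZMod p) V) - 1) (((σ h⁻¹ : Module.End (ZMod p) V) - 1) x)
        = σ g⁻¹ (σ h⁻¹ x) - σ g⁻¹ x - σ h⁻¹ x + x := by
      simp only [LinearMap.sub_apply, Module.End.one_apply, map_sub]
      abel
    have hswap : σ g⁻¹ (σ h⁻¹ x) = σ h⁻¹ (σ g⁻¹ x) := by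
      have c1 : σ g⁻¹ (σ h⁻¹ x) = (σ g⁻¹ * σ h⁻¹) x := rfl
      have c2 : σ h⁻¹ (σ g⁻¹ x) = (σ h⁻¹ * σ g⁻¹) x := rfl
      rw [c1, c2, ← map_mul, ← map_mul, mul_comm]
    rw [h2, h3, map_add, map_sub, map_sub, hswap]
  set J2D := apSub (genE δ ^ 2) with hJ2Ddef
  have hgen1 : ∀ a : H, (δ a : Module.End (ZMod p) (Module.Dual (ZMod p) V)) - 1 ∈ genE δ ^ 1 := by
    intro a
    have hp1 : genE δ ^ 1 = genE δ := pow_one _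
    rw [hp1]
    exact sub_one_mem_genE δ a
  have hmemJ2D : ∀ (g h : H) (φ : Module.Dual (ZMod p) V),
      ((δ g : Module.End (ZMod p) (Module.Dual (ZMod p) V)) - 1) (((δ h : Module.End (ZMod p) (Module.Dual (ZMod p) V)) - 1) φ) ∈ J2D := by
    intro g h φ
    have h2 : ((δ h : Module.End (ZMod p) (Module.Dual (ZMod p) V)) - 1) φ ∈ apSub (genE δ ^ 1) :=
      apply_mem_apSub (hgen1 h) φ
    have h3 := apply_mem_pow_add (hgen1 g) h2
    have h4 : (1 : ℕ) + 1 = 2 := by norm_num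
    rw [h4] at h3
    exact h3
  have hcoann : J2D.dualCoannihilator = soc2 σ := by
    ext x
    rw [Submodule.mem_dualCoannihilator, mem_soc2]
    constructor
    · intro hx g h
      rw [← forall_dual_apply_eq_zero_iff (R := ZMod p)]
      intro φ
      have h5 := hx _ (hmemJ2D g⁻¹ h⁻¹ φ)
      rw [hval g⁻¹ h⁻¹ φ x] at h5
      simpa [inv_inv] using h5
    · intro hx f hf
      have hsuf : J2D ≤ LinearMap.ker (Module.Dual.eval (ZMod p) V x) := by
        rw [hJ2Ddef]
        refine apSub_le ?_
        intro F hF φ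
        have hp2 : genE δ ^ 2 = genE δ * genE δ := sq (genE δ)
        rw [hp2] at hF
        rw [LinearMap.mem_ker]
        have claimA : ∀ u ∈ genE δ, ∀ w ∈ genE δ, ∀ ψ : Module.Dual (ZMod p) V, (u (w ψ)) x = 0 := by
          intro u hu
          rw [genE] at hu
          induction hu using Submodule.span_induction with
          | mem u hu =>
            obtain ⟨g, rfl⟩ := hu
            intro w hw
            rw [genE] at hw
            induction hw using Submodule.span_induction with
            | mem w hw =>
              obtain ⟨h, rfl⟩ := hw
              intro ψ
              rw [hval g h ψ x, hx g⁻¹ h⁻¹, map_zero]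
            | zero =>
              intro ψ
              rw [LinearMap.zero_apply, map_zero, LinearMap.zero_apply]
            | add w₁ w₂ _ _ hw₁ hw₂ =>
              intro ψ
              rw [LinearMap.add_apply, map_add, LinearMap.add_apply, hw₁ ψ, hw₂ ψ, add_zero]
            | smul t w _ hw₁ =>
              intro ψ
              rw [LinearMap.smul_apply, map_smul, LinearMap.smul_apply, hw₁ ψ, smul_zero]
          | zero =>
            intro w _ ψ
            rw [LinearMap.zero_apply, LinearMap.zero_apply]
          | add u₁ u₂ _ _ hu₁ hu₂ =>
            intro w hw ψ
            rw [LinearMap.add_apply, LinearMap.add_apply, hu₁ w hw ψ, hu₂ w hw ψ, add_zero]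
          | smul t u _ hu₁ =>
            intro w hw ψ
            rw [LinearMap.smul_apply, LinearMap.smul_apply, hu₁ w hw ψ, smul_zero]
        have hFeval : ∀ ψ : Module.Dual (ZMod p) V, (F ψ) x = 0 := by
          refine Submodule.mul_induction_on
            (C := fun F : Module.End (ZMod p) (Module.Dual (ZMod p) V) => ∀ ψ : Module.Dual (ZMod p) V, (F ψ) x = 0) hF ?_ ?_
          · intro u hu w hw ψ
            rw [Module.End.mul_apply]
            exact claimA u hu w hw ψ
          · intro F₁ F₂ h₁ h₂ ψ
            rw [LinearMap.add_apply, LinearMap.add_apply, h₁ ψ, h₂ ψ, add_zero]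
        exact hFeval φ
      exact hsuf hf
  have hcore := core δ hG
  have h1 : Module.finrank (ZMod p) ((Module.Dual (ZMod p) V) ⧸ J2D) + Module.finrank (ZMod p) J2D =
      Module.finrank (ZMod p) (Module.Dual (ZMod p) V) := Submodule.finrank_quotient_add_finrank _
  have h2 : Module.finrank (ZMod p) J2D + Module.finrank (ZMod p) J2D.dualCoannihilator =
      Module.finrank (ZMod p) V := Subspace.finrank_add_finrank_dualCoannihilator_eq _
  have h3 : Module.finrank (ZMod p) (Module.Dual (ZMod p) V) = Module.finrank (ZMod p) V :=
    Subspace.dual_finrank_eq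
  have h4 : Module.finrank (ZMod p) ((Module.Dual (ZMod p) V) ⧸ J2D) =
      Module.finrank (ZMod p) J2D.dualCoannihilator := by omega
  rw [hcoann] at h4
  rw [← h4, ← h3]
  exact hcore

end Soc2Bound


end Stmt5Aux

set_option maxHeartbeats 1000000 in
theorem stmt_5 (p : ℕ) [Fact p.Prime] (G : Type*) [CommGroup G]
    (hG : ∀ g : G, g ^ p = 1)
    (V : Type*) [AddCommGroup V] [Module (ZMod p) V]
    (ρ : Representation (ZMod p) G V)
    (hlf : ρ.IsLocallyFinite)
    (hinf : ¬ FiniteDimensional (ZMod p) V) :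
    ¬ FiniteDimensional (ZMod p) (Representation.invariants ρ) ∨
      ¬ FiniteDimensional (ZMod p) (Representation.invariants ρ.quotInvariants) := by
  classical
  by_contra hcon
  push_neg at hcon
  obtain ⟨hWfd, hQfd⟩ := hcon
  haveI := hWfd
  haveI := hQfd
  apply hinf
  have hppos : 0 < p := (Fact.out (p := p.Prime)).pos
  -- the "second invariants" subspace T of V
  set T : Submodule (ZMod p) V :=
    { carrier := {v | ∀ g : G, ρ g v - v ∈ ρ.invariants}
      add_mem' := by
        intro x y hx hy g
        have h1 : ρ g (x + y) - (x + y) = (ρ g x - x) + (ρ g y - y) := by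
          rw [map_add]; abel
        rw [h1]
        exact Submodule.add_mem _ (hx g) (hy g)
      zero_mem' := by
        intro g
        rw [map_zero, sub_zero]
        exact Submodule.zero_mem _
      smul_mem' := by
        intro c x hx g
        have h1 : ρ g (c • x) - c • x = c • (ρ g x - x) := by
          rw [map_smul, smul_sub]
        rw [h1]
        exact Submodule.smul_mem _ _ (hx g) } with hTdef
  have hTmem : ∀ v : V, v ∈ T ↔ ∀ g : G, ρ g v - v ∈ ρ.invariants := fun v => Iff.rfl
  -- T is finite dimensional
  haveI hTfd : FiniteDimensional (ZMod p) ↥T := by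
    rw [← Submodule.fg_iff_finiteDimensional]
    refine Submodule.fg_of_fg_map_of_fg_inf_ker ρ.invariants.mkQ ?_ ?_
    · have hle : T.map ρ.invariants.mkQ ≤ (ρ.quotInvariants).invariants := by
        rintro _ ⟨t, ht, rfl⟩
        rw [Representation.mem_invariants]
        intro g
        rw [Submodule.mkQ_apply, Stmt5Aux.quotInvariants_mk]
        exact (Submodule.Quotient.eq _).mpr ((hTmem t).mp ht g)
      haveI := Submodule.finiteDimensional_of_le hle
      exact (Submodule.fg_iff_finiteDimensional _).mpr inferInstance
    · have hle2 : T ⊓ LinearMap.ker ρ.invariants.mkQ ≤ ρ.invariants := by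
        rw [Submodule.ker_mkQ]
        exact inf_le_right
      haveI := Submodule.finiteDimensional_of_le hle2
      exact (Submodule.fg_iff_finiteDimensional _).mpr inferInstance
  set c := Module.finrank (ZMod p) ↥T with hcdef
  -- uniform bound for finite-dimensional subrepresentations
  have key : ∀ M : Submodule (ZMod p) V, (∀ g : G, ∀ v ∈ M, ρ g v ∈ M) →
      FiniteDimensional (ZMod p) ↥M →
      Module.finrank (ZMod p) ↥M ≤ c * p ^ (c * c) := by
    intro M hMst hMfd
    haveI := hMfd
    set σM := Stmt5Aux.subRep ρ M hMst with hσMdef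
    have hb := Stmt5Aux.soc2_bound σM hG
    -- soc2 σM injects into T
    have hsub : ∀ x : ↥M, x ∈ Stmt5Aux.soc2 σM → (x : V) ∈ T := by
      intro x hx
      rw [Stmt5Aux.mem_soc2] at hx
      rw [hTmem]
      intro g
      rw [Representation.mem_invariants]
      intro h
      have h1 := hx h g
      have h2 := congrArg (Subtype.val : ↥M → V) h1
      have h3 : ((((σM h : Module.End (ZMod p) ↥M) - 1)
          (((σM g : Module.End (ZMod p) ↥M) - 1) x) : ↥M) : V) =
          ρ h (ρ g (x : V) - (x : V)) - (ρ g (x : V) - (x : V)) := by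
        have e2 : ∀ (a : G) (y : ↥M),
            ((((σM a : Module.End (ZMod p) ↥M) - 1) y : ↥M) : V) = ρ a (y : V) - (y : V) := by
          intro a y
          rw [LinearMap.sub_apply, Module.End.one_apply, AddSubgroupClass.coe_sub]
          rfl
        rw [e2, e2]
      rw [h3, ZeroMemClass.coe_zero] at h2
      rw [sub_eq_zero] at h2
      exact h2
    set f : ↥(Stmt5Aux.soc2 σM) →ₗ[ZMod p] ↥T :=
      LinearMap.codRestrict T (M.subtype.comp (Stmt5Aux.soc2 σM).subtype)
        (fun x => hsub x.1 x.2) with hfdef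
    have hfinj : Function.Injective f := by
      intro x y hxy
      have h1 := congrArg (Subtype.val : ↥T → V) hxy
      exact Subtype.ext (Subtype.ext h1)
    have hs2 : Module.finrank (ZMod p) ↥(Stmt5Aux.soc2 σM) ≤ c :=
      LinearMap.finrank_le_finrank_of_injective hfinj
    refine le_trans hb ?_
    have hpow : p ^ (Module.finrank (ZMod p) ↥(Stmt5Aux.soc2 σM) *
        Module.finrank (ZMod p) ↥(Stmt5Aux.soc2 σM)) ≤ p ^ (c * c) :=
      Nat.pow_le_pow_right hppos (Nat.mul_le_mul hs2 hs2)
    exact Nat.mul_le_mul hs2 hpow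
  -- conclude that V is finite dimensional
  by_contra hnot
  set n := c * p ^ (c * c) + 1 with hndef
  set B := Basis.ofVectorSpace (ZMod p) V with hBdef
  haveI hinfidx : Infinite (Basis.ofVectorSpaceIndex (ZMod p) V) := by
    rw [← not_finite_iff_infinite]
    intro hfin
    exact hnot (Module.Finite.of_basis B)
  set emb := Infinite.natEmbedding (Basis.ofVectorSpaceIndex (ZMod p) V) with hembdef
  set vs : Fin n → V := fun i => B (emb (i : ℕ)) with hvsdef
  have hvsind : LinearIndependent (ZMod p) vs := by
    refine B.linearIndependent.comp (fun i : Fin n => emb (i : ℕ)) ?_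
    exact emb.injective.comp Fin.val_injective
  obtain ⟨M, hMst, hMsub, hMfd⟩ := hlf (Finset.image vs Finset.univ)
  have hmem : ∀ i : Fin n, vs i ∈ M := by
    intro i
    exact hMsub (Finset.mem_coe.mpr (Finset.mem_image_of_mem vs (Finset.mem_univ i)))
  set xs : Fin n → ↥M := fun i => ⟨vs i, hmem i⟩ with hxsdef
  have hxsind : LinearIndependent (ZMod p) xs := by
    refine LinearIndependent.of_comp M.subtype ?_
    exact hvsind
  haveI := hMfd
  have hcard := hxsind.fintype_card_le_finrank
  rw [Fintype.card_fin] at hcard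
  have hkey := key M hMst hMfd
  omega
end

section
/- The additive group F_p((t)) is an elementary abelian p-group, and any F_p-linear action of F_p((t)) on an F_p-vector space V such that every finitely generated subrepresentation is finite-dimensional, with V infinite-dimensional and V^G finite-dimensional (G = image of the action), has (V/V^G)^G infinite-dimensional. -/
open LaurentSeries

namespace Stmt18Aux

variable {p : ℕ} [Fact p.Prime] {G : Type*} [CommGroup G]
  {V : Type*} [AddCommGroup V] [Module (ZMod p) V]

variable (ρ : Representation (ZMod p) G V)

/-- The operator `ρ g - 1`. -/
noncomputable def Dm (g : G) : Module.End (ZMod p) V := ρ g - 1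

lemma Dm_apply (g : G) (v : V) : Dm ρ g v = ρ g v - v := rfl

lemma rho_comm (g h : G) : Commute (ρ g : Module.End (ZMod p) V) (ρ h) := by
  simp only [Commute, SemiconjBy, ← map_mul, mul_comm]

lemma rho_Dm_comm (g h : G) : Commute (ρ g : Module.End (ZMod p) V) (Dm ρ h) :=
  (rho_comm ρ g h).sub_right (Commute.one_right _)

lemma Dm_comm (g h : G) : Commute (Dm ρ g) (Dm ρ h) :=
  (rho_Dm_comm ρ g h).sub_left (Commute.one_left _)

lemma comm_apply {A B : Module.End (ZMod p) V} (h : Commute A B) (v : V) :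
    A (B v) = B (A v) := by
  have := DFunLike.congr_fun h.eq v
  simpa [Module.End.mul_apply] using this

/-- The canonical filtration: `filt (n+1) = preimage of invariants of `V / filt n``. -/
noncomputable def filt : ℕ → Submodule (ZMod p) V
  | 0 => ⊥
  | n + 1 => ⨅ g : G, Submodule.comap (Dm ρ g) (filt n)

lemma mem_filt_succ {n : ℕ} {v : V} :
    v ∈ filt ρ (n + 1) ↔ ∀ g : G, Dm ρ g v ∈ filt ρ n := by
  simp [filt, Submodule.mem_iInf]

lemma filt_le_succ (n : ℕ) : filt ρ n ≤ filt ρ (n + 1) := by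
  induction n with
  | zero => exact bot_le
  | succ n ih =>
      intro v hv
      rw [mem_filt_succ] at hv ⊢
      exact fun g => ih (hv g)

lemma filt_mono : Monotone (filt ρ) := monotone_nat_of_le_succ (filt_le_succ ρ)

lemma filt_one : filt ρ 1 = ρ.invariants := by
  ext v
  rw [mem_filt_succ]
  simp [Representation.mem_invariants, Dm_apply, sub_eq_zero, filt]

/-- chains of operators `(ρ g - 1)` -/
noncomputable def chain : List G → Module.End (ZMod p) V
  | [] => 1
  | g :: t => Dm ρ g * chain t

@[simp] lemma chain_nil : chain ρ [] = 1 := rfl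

@[simp] lemma chain_cons (g : G) (t : List G) :
    chain ρ (g :: t) = Dm ρ g * chain ρ t := rfl

lemma chain_append (l₁ l₂ : List G) :
    chain ρ (l₁ ++ l₂) = chain ρ l₁ * chain ρ l₂ := by
  induction l₁ with
  | nil => simp
  | cons g t ih => simp [ih, mul_assoc]

lemma commute_chain {A : Module.End (ZMod p) V} (h : ∀ g : G, Commute A (Dm ρ g)) (l : List G) :
    Commute A (chain ρ l) := by
  induction l with
  | nil => exact Commute.one_right _
  | cons g t ih => exact (h g).mul_right ih

lemma chain_perm {l l' : List G} (h : l.Perm l') : chain ρ l = chain ρ l' := by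
  induction h with
  | nil => rfl
  | cons x _ ih => simp [ih]
  | swap x y t => simp [← mul_assoc, (Dm_comm ρ y x).eq]
  | trans _ _ ih₁ ih₂ => rw [ih₁, ih₂]

lemma chain_mem_filt {m : ℕ} (l : List G) {v : V} (hv : v ∈ filt ρ (m + l.length)) :
    chain ρ l v ∈ filt ρ m := by
  induction l generalizing m with
  | nil => simpa using hv
  | cons g t ih =>
      have hv' : v ∈ filt ρ ((m + 1) + t.length) := by
        have : (m + 1) + t.length = m + (g :: t).length := by simp; omega
        rwa [this]
      have h2 := ih (m := m + 1) hv'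
      rw [chain_cons, Module.End.mul_apply]
      exact (mem_filt_succ ρ).mp h2 g

lemma mem_filt_of_chains {n : ℕ} {v : V}
    (h : ∀ l : List G, l.length = n → chain ρ l v = 0) : v ∈ filt ρ n := by
  induction n generalizing v with
  | zero =>
      have := h [] rfl
      simp only [chain_nil, Module.End.one_apply] at this
      simp [filt, this]
  | succ n ih =>
      rw [mem_filt_succ]
      intro g
      apply ih
      intro l hl
      have h2 : chain ρ (l ++ [g]) v = 0 := h _ (by simp [hl])
      rw [chain_append, Module.End.mul_apply] at h2
      simpa using h2


lemma charP_end [Nontrivial V] : CharP (Module.End (ZMod p) V) p := by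
  have : Nontrivial (Module.End (ZMod p) V) := by
    obtain ⟨v, hv⟩ := exists_ne (0 : V)
    refine ⟨1, 0, fun h => hv ?_⟩
    have := DFunLike.congr_fun h v
    simpa using this
  exact charP_of_injective_ringHom (algebraMap (ZMod p) (Module.End (ZMod p) V)).injective p

lemma Dm_pow_eq_zero [Nontrivial V] (hG : ∀ g : G, g ^ p = 1) (g : G) :
    (Dm ρ g) ^ p = 0 := by
  haveI := charP_end (p := p) (V := V)
  have h := sub_pow_char_of_commute (x := (ρ g : Module.End (ZMod p) V)) (y := 1)
    (p := p) (Commute.one_right _)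
  rw [Dm, h, one_pow, ← map_pow, hG, map_one, sub_self]


lemma chain_replicate (c : G) (n : ℕ) :
    chain ρ (List.replicate n c) = (Dm ρ c) ^ n := by
  induction n with
  | zero => simp
  | succ n ih => rw [List.replicate_succ, chain_cons, ih, pow_succ, (Dm_comm ρ c c).pow_right n]

lemma chain_zero_of_count [Nontrivial V] [DecidableEq G] (hG : ∀ g : G, g ^ p = 1) {l : List G} {c : G}
    (h : p ≤ l.count c) : chain ρ l = 0 := by
  classical
  have hle : (Multiset.replicate p c : Multiset G) ≤ (l : Multiset G) := by
    rw [← Multiset.le_count_iff_replicate_le]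
    simpa using h
  obtain ⟨u, hu⟩ := Multiset.le_iff_exists_add.mp hle
  have hperm : l.Perm (List.replicate p c ++ u.toList) := by
    have hcoe : ((List.replicate p c ++ u.toList : List G) : Multiset G) = (l : Multiset G) := by
      rw [hu]
      simp only [← Multiset.coe_add]
      simp [Multiset.coe_toList, Multiset.coe_replicate]
    exact (Multiset.coe_eq_coe.mp hcoe).symm
  rw [chain_perm ρ hperm, chain_append, chain_replicate, Dm_pow_eq_zero ρ hG, zero_mul]

/-- The key replacement lemma: chains applied to elements of `filt (len+1)` can be
computed after replacing each entry by a representative with the same action on `filt 2`. -/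
lemma chain_replace (r : G → G) (hr : ∀ g : G, ∀ w ∈ filt ρ 2, ρ (r g) w = ρ g w)
    (l : List G) : ∀ v : V, v ∈ filt ρ (l.length + 1) →
    chain ρ l v = chain ρ (l.map r) v := by
  induction l using List.reverseRecOn with
  | nil => intro v _; simp
  | append_singleton t g ih =>
      intro v hv
      have hv' : v ∈ filt ρ (t.length + 2) := by
        have : (t ++ [g]).length + 1 = t.length + 2 := by simp
        rwa [this] at hv
      have h2 : chain ρ t v ∈ filt ρ 2 := by
        apply chain_mem_filt
        rwa [add_comm] at hv'
      have e1 : ∀ h : G, chain ρ (t ++ [h]) v = chain ρ t (Dm ρ h v) := by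
        intro h
        rw [chain_append, Module.End.mul_apply]
        simp
      have swap : chain ρ t (Dm ρ g v) = chain ρ t (Dm ρ (r g) v) := by
        have key : chain ρ t (Dm ρ g v) - chain ρ t (Dm ρ (r g) v)
            = ρ g (chain ρ t v) - ρ (r g) (chain ρ t v) := by
          rw [← map_sub]
          have hD : Dm ρ g v - Dm ρ (r g) v = ρ g v - ρ (r g) v := by
            simp only [Dm_apply]; abel
          rw [hD, map_sub]
          congr 1
          · exact (comm_apply (commute_chain ρ (fun h => rho_Dm_comm ρ g h) t) v).symm
          · exact (comm_apply (commute_chain ρ (fun h => rho_Dm_comm ρ (r g) h) t) v).symm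
        rw [hr g _ h2, sub_self] at key
        exact sub_eq_zero.mp key
      have hmem : Dm ρ (r g) v ∈ filt ρ (t.length + 1) := (mem_filt_succ ρ).mp hv' (r g)
      rw [e1 g, swap, ih _ hmem, List.map_append]
      simp only [List.map_cons, List.map_nil]
      rw [chain_append, Module.End.mul_apply]
      simp

open MulAction

lemma exists_inv_functional (U : Submodule (ZMod p) V)
    (hstab : ∀ (g : G), ∀ v ∈ U, ρ g v ∈ U)
    [FiniteDimensional (ZMod p) U] (hU : U ≠ ⊥) (hG : ∀ g : G, g ^ p = 1) :
    ∃ f : U →ₗ[ZMod p] ZMod p, f ≠ 0 ∧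
      ∀ (g : G) (x : U), f ((ρ g).restrict (fun v hv => hstab g v hv) x) = f x := by
  classical
  haveI : Finite U := Module.finite_of_finite (ZMod p)
  set σ : G → U →ₗ[ZMod p] U := fun g => (ρ g).restrict (fun v hv => hstab g v hv) with hσ
  have σ_apply : ∀ (g : G) (x : U), (σ g x : V) = ρ g (x : V) := by
    intro g x; simp [hσ, LinearMap.restrict_apply]
  have σ_mul : ∀ g h : G, σ (g * h) = σ g ∘ₗ σ h := by
    intro g h; ext x
    simp only [LinearMap.coe_comp, Function.comp_apply]
    rw [σ_apply, σ_apply, σ_apply, map_mul, Module.End.mul_apply]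
  have σ_one : σ 1 = LinearMap.id := by
    ext x; rw [σ_apply, map_one]; rfl
  have hcomp : ∀ g : G, σ g ∘ₗ σ g⁻¹ = LinearMap.id := fun g => by
    rw [← σ_mul, mul_inv_cancel, σ_one]
  have hcomp' : ∀ g : G, σ g⁻¹ ∘ₗ σ g = LinearMap.id := fun g => by
    rw [← σ_mul, inv_mul_cancel, σ_one]
  set φ₀ : G → U ≃ₗ[ZMod p] U := fun g =>
    LinearEquiv.ofLinear (σ g) (σ g⁻¹) (hcomp g) (hcomp' g) with hφ₀
  have φ₀_apply : ∀ (g : G) (x : U), φ₀ g x = σ g x := fun g x => rfl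
  have φ₀_mul : ∀ g h : G, φ₀ (g * h) = φ₀ g * φ₀ h := by
    intro g h
    apply LinearEquiv.ext
    intro x
    have h1 : (φ₀ g * φ₀ h) x = φ₀ g (φ₀ h x) := rfl
    rw [h1, φ₀_apply, φ₀_apply, φ₀_apply, σ_mul]
    rfl
  set φ : G →* (U ≃ₗ[ZMod p] U) := MonoidHom.mk' φ₀ φ₀_mul with hφ
  set P : Subgroup (U ≃ₗ[ZMod p] U) := φ.range with hP
  have hPp : IsPGroup p P := by
    intro x
    refine ⟨1, ?_⟩
    obtain ⟨g, hg⟩ := x.2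
    apply Subtype.ext
    rw [pow_one]
    push_cast
    rw [← hg, ← map_pow, hG, map_one]
  letI : SMul P (Module.Dual (ZMod p) U) :=
    ⟨fun x f => f ∘ₗ ((x⁻¹ : P) : U ≃ₗ[ZMod p] U).toLinearMap⟩
  have smul_def : ∀ (x : P) (f : Module.Dual (ZMod p) U),
      x • f = f ∘ₗ ((x⁻¹ : P) : U ≃ₗ[ZMod p] U).toLinearMap := fun _ _ => rfl
  letI : MulAction P (Module.Dual (ZMod p) U) :=
    { one_smul := by
        intro f
        rw [smul_def, inv_one]
        ext x
        simp
      mul_smul := by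
        intro x y f
        rw [smul_def, smul_def, smul_def]
        ext v
        simp only [LinearMap.coe_comp, Function.comp_apply, mul_inv_rev]
        rfl }
  haveI : Finite (Module.Dual (ZMod p) U) :=
    Finite.of_injective (fun f => (f : U → ZMod p)) DFunLike.coe_injective
  have hmod := hPp.card_modEq_card_fixedPoints (Module.Dual (ZMod p) U)
  have hdvd : p ∣ Nat.card (Module.Dual (ZMod p) U) := by
    have := Fintype.ofFinite (Module.Dual (ZMod p) U)
    rw [Nat.card_eq_fintype_card]
    rw [Module.card_eq_pow_finrank (K := ZMod p) (V := Module.Dual (ZMod p) U), ZMod.card]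
    apply dvd_pow_self
    rw [Subspace.dual_finrank_eq]
    have : Nontrivial U := Submodule.nontrivial_iff_ne_bot.mpr hU
    exact Module.finrank_pos.ne'
  have h0 : (0 : Module.Dual (ZMod p) U) ∈ fixedPoints P (Module.Dual (ZMod p) U) := by
    intro x
    rw [smul_def]
    ext v
    simp
  have hfpdvd : p ∣ Nat.card (fixedPoints P (Module.Dual (ZMod p) U)) := by
    have h1 : Nat.card (Module.Dual (ZMod p) U) ≡ 0 [MOD p] :=
      (Nat.modEq_zero_iff_dvd).mpr hdvd
    exact (Nat.modEq_zero_iff_dvd).mp (hmod.symm.trans h1)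
  haveI : Finite (fixedPoints P (Module.Dual (ZMod p) U)) := Subtype.finite
  have hpos : 0 < Nat.card (fixedPoints P (Module.Dual (ZMod p) U)) :=
    Nat.card_pos_iff.mpr ⟨⟨⟨0, h0⟩⟩, inferInstance⟩
  have hlt : 1 < Nat.card (fixedPoints P (Module.Dual (ZMod p) U)) := by
    have hp2 : 2 ≤ p := (Fact.out : p.Prime).two_le
    have := Nat.le_of_dvd hpos hfpdvd
    omega
  haveI : Nontrivial (fixedPoints P (Module.Dual (ZMod p) U)) :=
    Finite.one_lt_card_iff_nontrivial.mp hlt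
  obtain ⟨f, hfne⟩ := exists_ne (⟨0, h0⟩ : fixedPoints P (Module.Dual (ZMod p) U))
  refine ⟨f.1, ?_, ?_⟩
  · intro hf0
    apply hfne
    apply Subtype.ext
    exact hf0
  · intro g x
    have hfix := f.2 (⟨φ g⁻¹, ⟨g⁻¹, rfl⟩⟩ : P)
    rw [smul_def] at hfix
    have hco : ((((⟨φ g⁻¹, ⟨g⁻¹, rfl⟩⟩ : P))⁻¹ : P) : U ≃ₗ[ZMod p] U) = φ₀ g := by
      have : ((((⟨φ g⁻¹, ⟨g⁻¹, rfl⟩⟩ : P))⁻¹ : P) : U ≃ₗ[ZMod p] U) = (φ g⁻¹)⁻¹ := rfl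
      rw [this, ← map_inv, inv_inv]
      rfl
    rw [hco] at hfix
    have := DFunLike.congr_fun hfix x
    exact this


/-- Every finite-dimensional stable submodule is contained in some filtration step. -/
lemma sub_le_filt (hG : ∀ g : G, g ^ p = 1) :
    ∀ (d : ℕ) (U : Submodule (ZMod p) V), (∀ (g : G), ∀ v ∈ U, ρ g v ∈ U) →
      FiniteDimensional (ZMod p) U → Module.finrank (ZMod p) U ≤ d → U ≤ filt ρ d := by
  intro d
  induction d with
  | zero =>
      intro U hstab hfd hd v hv
      rw [show filt ρ 0 = ⊥ from rfl, Submodule.mem_bot]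
      by_contra h0
      haveI : Nontrivial U := ⟨⟨⟨v, hv⟩, 0, fun h => h0 (by simpa using congrArg Subtype.val h)⟩⟩
      haveI := hfd
      have := Module.finrank_pos (R := ZMod p) (M := U)
      omega
  | succ d ih =>
      intro U hstab hfd hd
      by_cases hU : U = ⊥
      · subst hU; exact bot_le.trans (bot_le : (⊥ : Submodule (ZMod p) V) ≤ _)
      haveI := hfd
      obtain ⟨f, hf0, hfinv⟩ := exists_inv_functional ρ U hstab hU hG
      -- U' : span of the images of the Dm operators
      set S : Set V := {x | ∃ g : G, ∃ u ∈ U, x = Dm ρ g u} with hS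
      set U' : Submodule (ZMod p) V := Submodule.span (ZMod p) S with hU'
      have hgen : ∀ (g : G), ∀ u ∈ U, Dm ρ g u ∈ U' :=
        fun g u hu => Submodule.subset_span ⟨g, u, hu, rfl⟩
      have hU'leU : U' ≤ U := by
        rw [hU', Submodule.span_le]
        rintro x ⟨g, u, hu, rfl⟩
        exact sub_mem (hstab g u hu) hu
      -- U' is contained in the kernel of f
      set Z : Submodule (ZMod p) V := Submodule.map U.subtype (LinearMap.ker f) with hZ
      have hZleU : Z ≤ U := by
        rintro x ⟨y, hy, rfl⟩
        exact y.2
      have hU'leZ : U' ≤ Z := by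
        rw [hU', Submodule.span_le]
        rintro x ⟨g, u, hu, rfl⟩
        refine ⟨⟨Dm ρ g u, sub_mem (hstab g u hu) hu⟩, ?_, rfl⟩
        simp only [SetLike.mem_coe, LinearMap.mem_ker]
        have hsub : (⟨Dm ρ g u, sub_mem (hstab g u hu) hu⟩ : U)
            = (ρ g).restrict (fun v hv => hstab g v hv) ⟨u, hu⟩ - ⟨u, hu⟩ := by
          apply Subtype.ext
          simp [Dm_apply, LinearMap.restrict_apply]
        rw [hsub, map_sub, hfinv g ⟨u, hu⟩, sub_self]
      have hZneU : Z ≠ U := by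
        intro hEq
        obtain ⟨x, hx⟩ := DFunLike.ne_iff.mp hf0
        have hxZ : (x : V) ∈ Z := by rw [hEq]; exact x.2
        obtain ⟨y, hy, hyx⟩ := hxZ
        have hyx' : y = x := Subtype.ext hyx
        rw [hyx'] at hy
        exact hx (by simpa using hy)
      have hU'lt : U' < U := lt_of_le_of_lt hU'leZ (lt_of_le_of_ne hZleU hZneU)
      have hstab' : ∀ (g : G), ∀ v ∈ U', ρ g v ∈ U' := by
        intro g v hv
        refine Submodule.span_induction ?_ ?_ ?_ ?_ hv
        · rintro x ⟨h, u, hu, rfl⟩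
          have : ρ g (Dm ρ h u) = Dm ρ h (ρ g u) :=
            comm_apply (rho_Dm_comm ρ g h) u
          rw [this]
          exact hgen h _ (hstab g u hu)
        · simp
        · intro x y _ _ hx hy; rw [map_add]; exact add_mem hx hy
        · intro c x _ hx; rw [map_smul]; exact Submodule.smul_mem _ c hx
      haveI hfd' : FiniteDimensional (ZMod p) U' :=
        Submodule.finiteDimensional_of_le hU'leU
      have hrank' : Module.finrank (ZMod p) U' ≤ d := by
        have := Submodule.finrank_lt_finrank_of_lt (hU'lt)
        omega
      have hle' : U' ≤ filt ρ d := ih U' hstab' hfd' hrank'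
      intro v hv
      rw [mem_filt_succ]
      intro g
      exact hle' (hgen g v hv)

lemma exists_mem_filt (hG : ∀ g : G, g ^ p = 1) (hlf : ρ.IsLocallyFinite) (v : V) :
    ∃ n, v ∈ filt ρ n := by
  obtain ⟨U, hstab, hsub, hfd⟩ := hlf {v}
  exact ⟨Module.finrank (ZMod p) U,
    sub_le_filt ρ hG _ U hstab hfd le_rfl (hsub (by simp))⟩

lemma fd_of_sub_quot {M : Type*} [AddCommGroup M] [Module (ZMod p) M] (N : Submodule (ZMod p) M)
    (h1 : FiniteDimensional (ZMod p) N) (h2 : FiniteDimensional (ZMod p) (M ⧸ N)) :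
    FiniteDimensional (ZMod p) M := by
  have htop : (⊤ : Submodule (ZMod p) M).FG := by
    apply Submodule.fg_of_fg_map_of_fg_inf_ker N.mkQ
    · rw [Submodule.map_top, Submodule.range_mkQ]
      exact Module.finite_def.mp h2
    · rw [Submodule.ker_mkQ, top_inf_eq]
      exact (Submodule.fg_iff_finiteDimensional N).mpr h1
  exact Module.finite_def.mpr htop

lemma filt_stab (n : ℕ) : ∀ (g : G), ∀ v ∈ filt ρ n, ρ g v ∈ filt ρ n := by
  induction n with
  | zero =>
      intro g v hv
      have : v = 0 := by simpa [filt] using hv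
      subst this
      simp [filt]
  | succ n ih =>
      intro g v hv
      rw [mem_filt_succ] at hv ⊢
      intro h
      have hc : Dm ρ h (ρ g v) = ρ g (Dm ρ h v) := (comm_apply (rho_Dm_comm ρ g h) v).symm
      rw [hc]
      exact ih g _ (hv h)

lemma fd_step (r : G → G) (hr : ∀ g : G, ∀ w ∈ filt ρ 2, ρ (r g) w = ρ g w)
    (Rf : Finset G) (hRf : ∀ g, r g ∈ Rf) (i : ℕ)
    (h1 : FiniteDimensional (ZMod p) (filt ρ 1))
    (hi : FiniteDimensional (ZMod p) (filt ρ i)) :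
    FiniteDimensional (ZMod p) (filt ρ (i + 1)) := by
  classical
  haveI := h1
  haveI := hi
  set Ψ : filt ρ (i+1) →ₗ[ZMod p] ((Fin i → Rf) → filt ρ 1) :=
    LinearMap.pi (fun c => LinearMap.codRestrict (filt ρ 1)
      ((chain ρ (List.ofFn (fun j => ((c j : G))))) ∘ₗ (filt ρ (i+1)).subtype)
      (fun v => by
        have hv := v.2
        apply chain_mem_filt
        simp only [List.length_ofFn]
        rw [Nat.add_comm]
        exact hv)) with hΨ
  have hΨ_apply : ∀ (v : filt ρ (i+1)) (c : Fin i → Rf),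
      (Ψ v c : V) = chain ρ (List.ofFn (fun j => ((c j : G)))) (v : V) := by
    intro v c
    rfl
  have hker : LinearMap.ker Ψ ≤ Submodule.comap (filt ρ (i+1)).subtype (filt ρ i) := by
    intro v hv
    simp only [Submodule.mem_comap]
    apply mem_filt_of_chains
    intro l hl
    subst hl
    have hrep := chain_replace ρ r hr l v.1 v.2
    show chain ρ l (v : V) = 0
    rw [hrep]
    set c : Fin l.length → Rf := fun j => ⟨r (l.get j), hRf _⟩ with hc
    have hlist : List.ofFn (fun j => ((c j : G))) = l.map r := by
      simp only [hc]
      rw [show (fun j => ((⟨r (l.get j), hRf _⟩ : Rf) : G)) = r ∘ l.get from rfl]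
      rw [← List.map_ofFn, List.ofFn_get]
    have h0 : Ψ v = 0 := hv
    have := congrArg Subtype.val (congrFun h0 c)
    rw [hΨ_apply, hlist] at this
    simpa using this
  haveI : FiniteDimensional (ZMod p)
      (Submodule.comap (filt ρ (i+1)).subtype (filt ρ i)) :=
    (Submodule.comapSubtypeEquivOfLe (filt_le_succ ρ i)).symm.finiteDimensional
  haveI hkerfd : FiniteDimensional (ZMod p) (LinearMap.ker Ψ) :=
    Submodule.finiteDimensional_of_le hker
  haveI hcod : FiniteDimensional (ZMod p) ((Fin i → Rf) → filt ρ 1) := by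
    exact Module.Finite.pi
  haveI hrangefd : FiniteDimensional (ZMod p) (LinearMap.range Ψ) :=
    FiniteDimensional.finiteDimensional_submodule _
  exact fd_of_sub_quot (LinearMap.ker Ψ) hkerfd
    (Module.Finite.equiv Ψ.quotKerEquivRange.symm)

theorem main (hG : ∀ g : G, g ^ p = 1) (hlf : ρ.IsLocallyFinite)
    (hinf : ¬ FiniteDimensional (ZMod p) V)
    (hfixfin : FiniteDimensional (ZMod p) ρ.invariants) :
    ¬ FiniteDimensional (ZMod p) (Representation.invariants ρ.quotInvariants) := by
  intro h2
  classical
  haveI : Nontrivial V := by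
    by_contra hnt
    rw [not_nontrivial_iff_subsingleton] at hnt
    exact hinf (Module.finite_def.mpr ⟨{0}, Subsingleton.elim _ _⟩)
  have hf1 : FiniteDimensional (ZMod p) (filt ρ 1) := by
    rw [filt_one]
    exact hfixfin
  -- filt 2 is finite dimensional
  have hf2 : FiniteDimensional (ZMod p) (filt ρ 2) := by
    set q : filt ρ 2 →ₗ[ZMod p] (V ⧸ ρ.invariants) :=
      ρ.invariants.mkQ ∘ₗ (filt ρ 2).subtype with hq
    have hkq : FiniteDimensional (ZMod p) (LinearMap.ker q) := by
      have hle : LinearMap.ker q ≤ Submodule.comap (filt ρ 2).subtype (filt ρ 1) := by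
        intro v hv
        rw [LinearMap.mem_ker, hq] at hv
        simp only [LinearMap.coe_comp, Function.comp_apply, Submodule.coe_subtype,
          Submodule.mkQ_apply] at hv
        rw [Submodule.mem_comap, filt_one]
        exact (Submodule.Quotient.mk_eq_zero _).mp hv
      haveI : FiniteDimensional (ZMod p)
          (Submodule.comap (filt ρ 2).subtype (filt ρ 1)) :=
        (Submodule.comapSubtypeEquivOfLe (filt_le_succ ρ 1)).symm.finiteDimensional
      exact Submodule.finiteDimensional_of_le hle
    have hrq : FiniteDimensional (ZMod p) (LinearMap.range q) := by
      haveI := h2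
      have hle : LinearMap.range q ≤ (Representation.invariants ρ.quotInvariants) := by
        rintro x ⟨⟨v, hv⟩, rfl⟩
        rw [Representation.mem_invariants]
        intro g
        have happ : q ⟨v, hv⟩ = Submodule.Quotient.mk v := rfl
        rw [happ]
        have happ2 : ρ.quotInvariants g (Submodule.Quotient.mk v)
            = Submodule.Quotient.mk (ρ g v) := rfl
        rw [happ2, Submodule.Quotient.eq]
        have := (mem_filt_succ ρ).mp hv g
        rwa [filt_one] at this
      exact Submodule.finiteDimensional_of_le hle
    exact fd_of_sub_quot (LinearMap.ker q) hkq (Module.Finite.equiv q.quotKerEquivRange.symm)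
  -- choose coset representatives via the action on filt 2
  haveI : Finite (filt ρ 2) := Module.finite_of_finite (ZMod p)
  haveI : Finite (Module.End (ZMod p) (filt ρ 2)) :=
    Finite.of_injective (fun f => (f : filt ρ 2 → filt ρ 2)) DFunLike.coe_injective
  set E : G → Module.End (ZMod p) (filt ρ 2) :=
    fun g => (ρ g).restrict (fun v hv => filt_stab ρ 2 g v hv) with hE
  set r : G → G := fun g => Function.invFun E (E g) with hrdef
  have hrE : ∀ g, E (r g) = E g := fun g => Function.invFun_eq ⟨g, rfl⟩
  have hr : ∀ g : G, ∀ w ∈ filt ρ 2, ρ (r g) w = ρ g w := by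
    intro g w hw
    have h1' := DFunLike.congr_fun (hrE g) ⟨w, hw⟩
    have h2' := congrArg Subtype.val h1'
    simpa [hE, LinearMap.restrict_apply] using h2'
  have hfin : (Set.range r).Finite := by
    have hsub : Set.range r ⊆ Function.invFun E '' (Set.range E) := by
      rintro x ⟨g, rfl⟩
      exact ⟨E g, ⟨g, rfl⟩, rfl⟩
    exact ((Set.toFinite (Set.range E)).image _).subset hsub
  set Rf : Finset G := hfin.toFinset with hRfdef
  have hRf : ∀ g, r g ∈ Rf := fun g => hfin.mem_toFinset.mpr ⟨g, rfl⟩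
  -- all filtration steps are finite dimensional
  have hfAll : ∀ n, FiniteDimensional (ZMod p) (filt ρ n) := by
    intro n
    induction n with
    | zero => exact (inferInstance : FiniteDimensional (ZMod p) (⊥ : Submodule (ZMod p) V))
    | succ n ih => exact fd_step ρ r hr Rf hRf n hf1 ih
  -- stabilization
  set n₀ : ℕ := Rf.card * (p - 1) + 1 with hn₀
  have hstep : ∀ m, n₀ ≤ m → filt ρ (m+1) ≤ filt ρ m := by
    intro m hm v hv
    apply mem_filt_of_chains
    intro l hl
    rw [chain_replace ρ r hr l v (by rw [hl]; exact hv)]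
    obtain ⟨c, hc⟩ : ∃ c : G, p ≤ (l.map r).count c := by
      by_contra hcon
      push_neg at hcon
      have hlen : (l.map r).length = m := by simp [hl]
      have hsum : ∑ a ∈ (l.map r).toFinset, (l.map r).count a = m := by
        rw [← hlen]
        have := Multiset.toFinset_sum_count_eq (l.map r : Multiset G)
        simpa using this
      have hsubf : (l.map r).toFinset ⊆ Rf := by
        intro x hx
        rw [List.mem_toFinset] at hx
        obtain ⟨a, _, rfl⟩ := List.mem_map.mp hx
        exact hRf a
      have hbound : ∑ a ∈ (l.map r).toFinset, (l.map r).count a ≤ Rf.card * (p-1) := by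
        calc ∑ a ∈ (l.map r).toFinset, (l.map r).count a
            ≤ ∑ _a ∈ (l.map r).toFinset, (p-1) :=
              Finset.sum_le_sum (fun a _ => by have := hcon a; omega)
          _ = (l.map r).toFinset.card * (p-1) := by rw [Finset.sum_const, smul_eq_mul]
          _ ≤ Rf.card * (p-1) := Nat.mul_le_mul_right _ (Finset.card_le_card hsubf)
      omega
    rw [chain_zero_of_count ρ hG hc]
    rfl
  have hcap : ∀ n, filt ρ n ≤ filt ρ n₀ := by
    intro n
    induction n with
    | zero => exact bot_le
    | succ n ih =>
        rcases le_or_gt (n+1) n₀ with h | h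
        · exact filt_mono ρ h
        · exact (hstep n (by omega)).trans ih
  have htop : filt ρ n₀ = ⊤ := by
    rw [eq_top_iff]
    intro v _
    obtain ⟨n, hn⟩ := exists_mem_filt ρ hG hlf v
    exact hcap n hn
  haveI : FiniteDimensional (ZMod p) (⊤ : Submodule (ZMod p) V) := htop ▸ hfAll n₀
  exact hinf (Module.Finite.equiv (Submodule.topEquiv))

end Stmt18Aux


theorem stmt_18 (p : ℕ) [Fact p.Prime]
    (V : Type*) [AddCommGroup V] [Module (ZMod p) V]
    (ρ : Representation (ZMod p) (Multiplicative (LaurentSeries (ZMod p))) V)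
    (hlf : ρ.IsLocallyFinite)
    (hinf : ¬ FiniteDimensional (ZMod p) V)
    (hfixfin : FiniteDimensional (ZMod p) (Representation.invariants ρ)) :
    (∀ x : LaurentSeries (ZMod p), p • x = 0) ∧
      ¬ FiniteDimensional (ZMod p) (Representation.invariants ρ.quotInvariants) := by
  have part1 : ∀ x : LaurentSeries (ZMod p), p • x = 0 := by
    intro x
    rw [← Nat.cast_smul_eq_nsmul (ZMod p), ZMod.natCast_self, zero_smul]
  refine ⟨part1, ?_⟩
  have hG : ∀ g : Multiplicative (LaurentSeries (ZMod p)), g ^ p = 1 := by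
    intro g
    apply Multiplicative.toAdd.injective
    rw [toAdd_pow, toAdd_one, part1]
  exact Stmt18Aux.main ρ hG hlf hinf hfixfin
end
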